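/- If X is a well-filtered T₀ space, then the Scott power space Σ K(X) (the set K(X) of nonempty compact saturated subsets of X, with the Scott topology of the Smyth order) is itself a well-filtered space. -/

import Mathlib

open Set Topology TopologicalSpace

universe u v

/-- A subset of a topological space is *saturated* if it equals the intersection of the
open sets containing it. -/
def IsSat {X : Type u} [TopologicalSpace X] (A : Set X) : Prop :=
  A = ⋂₀ {U : Set X | IsOpen U ∧ A ⊆ U}

/-- The saturation `↑a` of a point `a` : the intersection of all open sets containing `a`. -/
def satPt {X : Type u} [TopologicalSpace X] (a : X) : Set X :=
  ⋂₀ {U : Set X | IsOpen U ∧ a ∈ U}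

/-- `KS X` is the collection of all nonempty compact saturated subsets of `X`. -/
def KS (X : Type u) [TopologicalSpace X] : Type u :=
  {K : Set X // K.Nonempty ∧ IsCompact K ∧ IsSat K}

/-- The *Smyth order* on `KS X` : `K ≤ L` iff `L ⊆ K` (reverse inclusion). -/
instance KS.instPartialOrder {X : Type u} [TopologicalSpace X] : PartialOrder (KS X) where
  le K L := L.1 ⊆ K.1
  le_refl K := subset_rfl
  le_trans K L M h₁ h₂ := by intro x hx; exact h₁ (h₂ hx)
  le_antisymm K L h₁ h₂ := by exact Subtype.ext (subset_antisymm h₂ h₁)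

/-- The *upper Vietoris topology* on `KS X`, generated by the sets `□U = {K | K ⊆ U}`
for `U` open in `X`.  The resulting space is the Smyth power space `P_S(X)`. -/
def upperVietoris (X : Type u) [TopologicalSpace X] : TopologicalSpace (KS X) :=
  TopologicalSpace.generateFrom
    {S : Set (KS X) | ∃ U : Set X, IsOpen U ∧ S = {K : KS X | K.1 ⊆ U}}

/-- Scott-open subsets of a preorder: upper sets inaccessible by suprema of
(nonempty) directed sets. -/
def ScottOpen {P : Type u} [Preorder P] (U : Set P) : Prop :=
  IsUpperSet U ∧ ∀ d : Set P, d.Nonempty → DirectedOn (· ≤ ·) d →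
    ∀ a : P, IsLUB d a → a ∈ U → (d ∩ U).Nonempty

/-- The Scott topology of a preorder. -/
def scottTop (P : Type u) [Preorder P] : TopologicalSpace P where
  IsOpen := ScottOpen
  isOpen_univ := ⟨isUpperSet_univ, fun d hd _ _ _ _ => by simpa using hd⟩
  isOpen_inter := by
    rintro U V ⟨hUu, hUd⟩ ⟨hVu, hVd⟩
    refine ⟨hUu.inter hVu, fun d hd hdir a ha haUV => ?_⟩
    obtain ⟨x, hxd, hxU⟩ := hUd d hd hdir a ha haUV.1
    obtain ⟨y, hyd, hyV⟩ := hVd d hd hdir a ha haUV.2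
    obtain ⟨z, hzd, hxz, hyz⟩ := hdir x hxd y hyd
    exact ⟨z, hzd, hUu hxz hxU, hVu hyz hyV⟩
  isOpen_sUnion := by
    intro S hS
    refine ⟨isUpperSet_sUnion fun s hs => (hS s hs).1, fun d hd hdir a ha haU => ?_⟩
    obtain ⟨t, htS, hat⟩ := haU
    obtain ⟨x, hxd, hxt⟩ := (hS t htS).2 d hd hdir a ha hat
    exact ⟨x, hxd, t, htS, hxt⟩

/-- A topological space is *well-filtered* if for every nonempty family of nonempty compact
saturated sets which is filtered under reverse inclusion and every open `U` containing the
intersection of the family, some member of the family is contained in `U`. -/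
def WellFiltered (X : Type u) [TopologicalSpace X] : Prop :=
  ∀ 𝒦 : Set (Set X), 𝒦.Nonempty →
    (∀ K ∈ 𝒦, K.Nonempty ∧ IsCompact K ∧ IsSat K) →
    (∀ K₁ ∈ 𝒦, ∀ K₂ ∈ 𝒦, ∃ K₃ ∈ 𝒦, K₃ ⊆ K₁ ∧ K₃ ⊆ K₂) →
    ∀ U : Set X, IsOpen U → ⋂₀ 𝒦 ⊆ U → ∃ K ∈ 𝒦, K ⊆ U

/-- The specialization order of a topological space: `x ≤ y` iff `x ∈ cl {y}`. -/
def specLE {X : Type u} [TopologicalSpace X] (x y : X) : Prop := x ∈ closure {y}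

/-- Least upper bound with respect to an explicit relation. -/
def RelLUB {P : Type u} (r : P → P → Prop) (d : Set P) (a : P) : Prop :=
  (∀ x ∈ d, r x a) ∧ ∀ b : P, (∀ x ∈ d, r x b) → r a b

/-- Scott openness with respect to an explicit relation. -/
def RelScottOpen {P : Type u} (r : P → P → Prop) (U : Set P) : Prop :=
  (∀ ⦃x y : P⦄, x ∈ U → r x y → y ∈ U) ∧
  ∀ d : Set P, d.Nonempty → DirectedOn r d → ∀ a : P, RelLUB r d a → a ∈ U → (d ∩ U).Nonempty

/-- A `d`-space (monotone convergence space): the specialization order is directed complete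
and every open set is Scott open with respect to the specialization order. -/
def DSpace (X : Type u) [TopologicalSpace X] : Prop :=
  (∀ d : Set X, d.Nonempty → DirectedOn specLE d → ∃ a : X, RelLUB specLE d a) ∧
  ∀ U : Set X, IsOpen U → RelScottOpen specLE U

/-- A space is *sober* if every irreducible closed set is the closure of a unique point. -/
def SoberSp (Z : Type u) [TopologicalSpace Z] : Prop :=
  ∀ A : Set Z, IsClosed A → IsIrreducible A → ∃! z : Z, A = closure {z}

/-- A closed set `A` is a *Rudin set* if there is a (nonempty) family of nonempty compact
saturated sets, filtered under reverse inclusion, such that `A` is a minimal closed set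
meeting every member of the family. -/
def RudinSet {X : Type u} [TopologicalSpace X] (A : Set X) : Prop :=
  IsClosed A ∧
  ∃ 𝒦 : Set (Set X), 𝒦.Nonempty ∧
    (∀ K ∈ 𝒦, K.Nonempty ∧ IsCompact K ∧ IsSat K) ∧
    (∀ K₁ ∈ 𝒦, ∀ K₂ ∈ 𝒦, ∃ K₃ ∈ 𝒦, K₃ ⊆ K₁ ∧ K₃ ⊆ K₂) ∧
    (∀ K ∈ 𝒦, (A ∩ K).Nonempty) ∧
    (∀ B : Set X, IsClosed B → (∀ K ∈ 𝒦, (B ∩ K).Nonempty) → B ⊆ A → B = A)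

/-- A *Rudin space*: every irreducible closed subset is a Rudin set. -/
def RudinSpace (X : Type u) [TopologicalSpace X] : Prop :=
  ∀ A : Set X, IsClosed A → IsIrreducible A → RudinSet A

/-- A closed set `A` is *well-filtered determined* (WD) if every continuous map into a
well-filtered T₀ space sends it to a set whose closure is a point closure. -/
def WDSet {X : Type u} [TopologicalSpace X] (A : Set X) : Prop :=
  ∀ (Y : Type v) [TopologicalSpace Y] [T0Space Y], WellFiltered Y →
    ∀ f : X → Y, Continuous f → ∃ y : Y, closure (f '' A) = closure {y}

/-- A *well-filtered determined (WD) space*: every irreducible closed subset is WD. -/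
def WDSpace (X : Type u) [TopologicalSpace X] : Prop :=
  ∀ A : Set X, IsClosed A → IsIrreducible A → WDSet.{u, v} A

/-- Property S: for every irreducible closed set `A`, the family `{↑a : a ∈ A}` is an
irreducible subset of the Scott power space `Σ K(X)`, or
`◇A = {K ∈ K(X) : K ∩ A ≠ ∅}` is an irreducible closed subset of `Σ K(X)`. -/
def PropertyS (X : Type u) [TopologicalSpace X] : Prop :=
  ∀ A : Set X, IsClosed A → IsIrreducible A →
    @IsIrreducible (KS X) (scottTop (KS X)) {K : KS X | ∃ a ∈ A, K.1 = satPt a} ∨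
    (@IsClosed (KS X) (scottTop (KS X)) {K : KS X | (K.1 ∩ A).Nonempty} ∧
      @IsIrreducible (KS X) (scottTop (KS X)) {K : KS X | (K.1 ∩ A).Nonempty})

/-- The order of Jia's dcpo on `ℕ × ℕ × (ℕ ∪ {∞})`:
`(i₁,j₁,k₁) ≤ (i₂,j₂,k₂)` iff (`i₁ = i₂`, `j₁ = j₂` and `k₁ ≤ k₂`) or
(`i₂ = i₁ + 1`, `k₁ ≤ j₂` and `k₂ = ∞`). -/
def LJiaLE (a b : ℕ × ℕ × WithTop ℕ) : Prop :=
  (a.1 = b.1 ∧ a.2.1 = b.2.1 ∧ a.2.2 ≤ b.2.2) ∨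
  (b.1 = a.1 + 1 ∧ a.2.2 ≤ (b.2.1 : WithTop ℕ) ∧ b.2.2 = ⊤)

section Aux
variable {X : Type u} [TopologicalSpace X]

lemma mem_satSet_iff {A : Set X} {y : X} :
    y ∈ ⋂₀ {U : Set X | IsOpen U ∧ A ⊆ U} ↔
      ∃ x ∈ A, ∀ U : Set X, IsOpen U → x ∈ U → y ∈ U := by
  constructor
  · intro hy
    by_contra hc
    push_neg at hc
    have hA : A ⊆ ⋃₀ {U : Set X | IsOpen U ∧ y ∉ U} := by
      intro x hx
      obtain ⟨U, hUo, hxU, hyU⟩ := hc x hx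
      exact ⟨U, ⟨hUo, hyU⟩, hxU⟩
    have hyW := hy (⋃₀ {U : Set X | IsOpen U ∧ y ∉ U})
      ⟨isOpen_sUnion fun U hU => hU.1, hA⟩
    obtain ⟨U, hU, hyU⟩ := hyW
    exact hU.2 hyU
  · rintro ⟨x, hxA, hx⟩ V ⟨hVo, hAV⟩
    exact hx V hVo (hAV hxA)

lemma isSat_iff {A : Set X} :
    IsSat A ↔ ∀ y : X, (∃ x ∈ A, ∀ U : Set X, IsOpen U → x ∈ U → y ∈ U) → y ∈ A := by
  constructor
  · intro h y hy
    have := mem_satSet_iff.2 hy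
    rw [← h] at this
    exact this
  · intro h
    refine subset_antisymm (fun y hy => ?_) (fun y hy => h y (mem_satSet_iff.1 hy))
    intro V hV
    exact hV.2 hy

lemma isSat_sInter {S : Set (Set X)} (h : ∀ A ∈ S, IsSat A) : IsSat (⋂₀ S) := by
  rw [isSat_iff]
  rintro y ⟨x, hx, hxy⟩
  intro A hA
  exact (isSat_iff.1 (h A hA)) y ⟨x, hx A hA, hxy⟩

lemma isSat_sUnion {S : Set (Set X)} (h : ∀ A ∈ S, IsSat A) : IsSat (⋃₀ S) := by
  rw [isSat_iff]
  rintro y ⟨x, ⟨A, hAS, hxA⟩, hxy⟩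
  exact ⟨A, hAS, (isSat_iff.1 (h A hAS)) y ⟨x, hxA, hxy⟩⟩

lemma wf_sInter (hwf : WellFiltered X) {𝒟 : Set (Set X)} (hne : 𝒟.Nonempty)
    (hmem : ∀ K ∈ 𝒟, K.Nonempty ∧ IsCompact K ∧ IsSat K)
    (hdir : ∀ K₁ ∈ 𝒟, ∀ K₂ ∈ 𝒟, ∃ K₃ ∈ 𝒟, K₃ ⊆ K₁ ∧ K₃ ⊆ K₂) :
    (⋂₀ 𝒟).Nonempty ∧ IsCompact (⋂₀ 𝒟) ∧ IsSat (⋂₀ 𝒟) := by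
  refine ⟨?_, ?_, isSat_sInter fun A hA => (hmem A hA).2.2⟩
  · by_contra hc
    rw [Set.not_nonempty_iff_eq_empty] at hc
    obtain ⟨K, hK, hKsub⟩ := hwf 𝒟 hne hmem hdir ∅ isOpen_empty (by rw [hc])
    exact absurd ((hmem K hK).1) (by rw [Set.subset_empty_iff.1 hKsub]; simp)
  · apply isCompact_of_finite_subcover
    intro ι U hUo hs
    obtain ⟨K, hK, hKU⟩ := hwf 𝒟 hne hmem hdir (⋃ i, U i) (isOpen_iUnion hUo) hs
    obtain ⟨t, ht⟩ := (hmem K hK).2.1.elim_finite_subcover U hUo hKU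
    exact ⟨t, (sInter_subset_of_mem hK).trans ht⟩

lemma KS.le_iff {K L : KS X} : K ≤ L ↔ L.1 ⊆ K.1 := Iff.rfl

lemma ks_image_props {d : Set (KS X)} :
    ∀ K ∈ Subtype.val '' d, K.Nonempty ∧ IsCompact K ∧ IsSat K := by
  rintro K ⟨L, _, rfl⟩; exact L.2

lemma ks_image_filtered {d : Set (KS X)} (hd : DirectedOn (· ≤ ·) d) :
    ∀ K₁ ∈ Subtype.val '' d, ∀ K₂ ∈ Subtype.val '' d,
      ∃ K₃ ∈ Subtype.val '' d, K₃ ⊆ K₁ ∧ K₃ ⊆ K₂ := by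
  rintro _ ⟨L₁, h₁, rfl⟩ _ ⟨L₂, h₂, rfl⟩
  obtain ⟨L₃, h₃, hle₁, hle₂⟩ := hd L₁ h₁ L₂ h₂
  exact ⟨L₃.1, ⟨L₃, h₃, rfl⟩, hle₁, hle₂⟩

noncomputable def ksInf (hwf : WellFiltered X) {d : Set (KS X)} (hne : d.Nonempty)
    (hdir : DirectedOn (· ≤ ·) d) : KS X :=
  ⟨⋂₀ (Subtype.val '' d),
    wf_sInter hwf (hne.image _) ks_image_props (ks_image_filtered hdir)⟩

lemma isLUB_ksInf (hwf : WellFiltered X) {d : Set (KS X)} (hne : d.Nonempty)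
    (hdir : DirectedOn (· ≤ ·) d) : IsLUB d (ksInf hwf hne hdir) := by
  constructor
  · intro K hK
    exact sInter_subset_of_mem ⟨K, hK, rfl⟩
  · intro b hb
    rw [KS.le_iff]
    refine subset_sInter ?_
    rintro _ ⟨L, hL, rfl⟩
    exact hb hL

lemma lub_val (hwf : WellFiltered X) {d : Set (KS X)} (hne : d.Nonempty)
    (hdir : DirectedOn (· ≤ ·) d) {a : KS X} (ha : IsLUB d a) :
    a.1 = ⋂₀ (Subtype.val '' d) :=
  congrArg Subtype.val (ha.unique (isLUB_ksInf hwf hne hdir))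

lemma box_scottOpen (hwf : WellFiltered X) {U : Set X} (hU : IsOpen U) :
    ScottOpen {K : KS X | K.1 ⊆ U} := by
  constructor
  · intro K L hKL hK
    exact Subset.trans hKL hK
  · intro d hne hdir a ha haU
    have hval : (⋂₀ (Subtype.val '' d)) ⊆ U := by
      rw [← lub_val hwf hne hdir ha]; exact haU
    obtain ⟨_, ⟨L, hLd, rfl⟩, hKU⟩ := hwf _ (hne.image _) ks_image_props
      (ks_image_filtered hdir) U hU hval
    exact ⟨L, hLd, hKU⟩

end Aux

section Scott
variable {X : Type u} [TopologicalSpace X]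

lemma scottTop_isOpen_iff {s : Set (KS X)} :
    @IsOpen (KS X) (scottTop (KS X)) s ↔ ScottOpen s := Iff.rfl

lemma notMem_scottOpen (hwf : WellFiltered X) (x : X) :
    @IsOpen (KS X) (scottTop (KS X)) {K : KS X | x ∉ K.1} := by
  letI : TopologicalSpace (KS X) := scottTop (KS X)
  have heq : {K : KS X | x ∉ K.1} =
      ⋃₀ {S : Set (KS X) | ∃ U : Set X, IsOpen U ∧ x ∉ U ∧ S = {K : KS X | K.1 ⊆ U}} := by
    ext K
    simp only [mem_setOf_eq, mem_sUnion]
    constructor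
    · intro hx
      have hs := K.2.2.2
      rw [hs, mem_sInter] at hx
      push_neg at hx
      obtain ⟨U, hU, hxU⟩ := hx
      exact ⟨_, ⟨U, hU.1, hxU, rfl⟩, hU.2⟩
    · rintro ⟨_, ⟨U, hUo, hxU, rfl⟩, hKU⟩
      exact fun hxK => hxU (hKU hxK)
  rw [heq]
  apply isOpen_sUnion
  rintro _ ⟨U, hUo, _, rfl⟩
  exact box_scottOpen hwf hUo

lemma scottClosed_lower {C : Set (KS X)} (hC : @IsClosed (KS X) (scottTop (KS X)) C)
    {K L : KS X} (hK : K ∈ C) (hLK : L ≤ K) : L ∈ C := by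
  by_contra hL
  exact (show ScottOpen Cᶜ from hC.isOpen_compl).1 hLK hL hK

lemma scottClosed_dsup {C : Set (KS X)} (hC : @IsClosed (KS X) (scottTop (KS X)) C)
    {d : Set (KS X)} (hdC : d ⊆ C) (hne : d.Nonempty) (hdir : DirectedOn (· ≤ ·) d)
    {a : KS X} (ha : IsLUB d a) : a ∈ C := by
  by_contra hac
  obtain ⟨K, hKd, hKc⟩ := (show ScottOpen Cᶜ from hC.isOpen_compl).2 d hne hdir a ha hac
  exact hKc (hdC hKd)

lemma union_props (hwf : WellFiltered X) {S : Set (KS X)} (hSne : S.Nonempty)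
    (hScomp : @IsCompact (KS X) (scottTop (KS X)) S) :
    (⋃₀ (Subtype.val '' S)).Nonempty ∧ IsCompact (⋃₀ (Subtype.val '' S)) ∧
      IsSat (⋃₀ (Subtype.val '' S)) := by
  letI : TopologicalSpace (KS X) := scottTop (KS X)
  obtain ⟨K₀, hK₀⟩ := hSne
  refine ⟨?_, ?_, isSat_sUnion fun A hA => (ks_image_props A hA).2.2⟩
  · obtain ⟨x, hx⟩ := K₀.2.1
    exact ⟨x, K₀.1, ⟨K₀, hK₀, rfl⟩, hx⟩
  · apply isCompact_of_finite_subcover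
    intro ι V hVo hsub
    have hcover : S ⊆ ⋃ F : Finset ι, {K : KS X | K.1 ⊆ ⋃ i ∈ F, V i} := by
      intro K hK
      obtain ⟨F, hF⟩ := K.2.2.1.elim_finite_subcover V hVo
        ((subset_sUnion_of_mem (Set.mem_image_of_mem Subtype.val hK)).trans hsub)
      exact mem_iUnion.2 ⟨F, hF⟩
    obtain ⟨T, hT⟩ := hScomp.elim_finite_subcover _
      (fun F : Finset ι => box_scottOpen hwf (isOpen_biUnion fun i _ => hVo i)) hcover
    classical
    refine ⟨T.biUnion id, ?_⟩
    rintro x ⟨_, ⟨K, hKS, rfl⟩, hxK⟩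
    have h1 : @Membership.mem (KS X) (Set (KS X)) _ (⋃ F ∈ T, {K : KS X | K.1 ⊆ ⋃ i ∈ F, V i}) K :=
      hT hKS
    obtain ⟨F, hFT, hKF⟩ := Set.mem_iUnion₂.1 h1
    have h2 := hKF hxK
    simp only [mem_iUnion] at h2
    obtain ⟨i, hiF, hxi⟩ := h2
    exact mem_biUnion (Finset.mem_biUnion.2 ⟨F, hFT, hiF⟩) hxi

lemma exists_min_closed {𝒦 : Set (Set (KS X))} (h𝒦ne : 𝒦.Nonempty)
    (hcomp : ∀ 𝒬 ∈ 𝒦, @IsCompact (KS X) (scottTop (KS X)) 𝒬)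
    {𝒜 : Set (KS X)} (h𝒜 : @IsClosed (KS X) (scottTop (KS X)) 𝒜)
    (hmeet : ∀ 𝒬 ∈ 𝒦, (𝒜 ∩ 𝒬).Nonempty) :
    ∃ 𝒞 : Set (KS X), @IsClosed (KS X) (scottTop (KS X)) 𝒞 ∧ 𝒞 ⊆ 𝒜 ∧
      (∀ 𝒬 ∈ 𝒦, (𝒞 ∩ 𝒬).Nonempty) ∧
      ∀ B : Set (KS X), @IsClosed (KS X) (scottTop (KS X)) B → B ⊆ 𝒞 →
        (∀ 𝒬 ∈ 𝒦, (B ∩ 𝒬).Nonempty) → B = 𝒞 := by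
  letI : TopologicalSpace (KS X) := scottTop (KS X)
  set S : Set (Set (KS X)) :=
    {B | IsClosed B ∧ B ⊆ 𝒜 ∧ ∀ 𝒬 ∈ 𝒦, (B ∩ 𝒬).Nonempty} with hS
  have hzorn : ∀ c ⊆ S, IsChain (· ⊆ ·) c → c.Nonempty →
      ∃ lb ∈ S, ∀ s ∈ c, lb ⊆ s := by
    intro c hcS hchain hcne
    refine ⟨⋂₀ c, ⟨isClosed_sInter fun B hB => (hcS hB).1,
      (sInter_subset_of_mem hcne.choose_spec).trans (hcS hcne.choose_spec).2.1, ?_⟩,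
      fun s hs => sInter_subset_of_mem hs⟩
    intro 𝒬 h𝒬
    by_contra hc
    rw [Set.not_nonempty_iff_eq_empty] at hc
    haveI : Nonempty c := hcne.to_subtype
    have hsub : 𝒬 ⊆ ⋃ B : c, (B.1)ᶜ := by
      intro q hq
      by_contra hq'
      simp only [mem_iUnion, mem_compl_iff, not_exists, not_not] at hq'
      have : q ∈ ⋂₀ c ∩ 𝒬 := ⟨fun B hB => hq' ⟨B, hB⟩, hq⟩
      rw [hc] at this
      exact this
    have hdir : Directed (· ⊆ ·) (fun B : c => (B.1)ᶜ) := by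
      intro B B'
      rcases hchain.total B.2 B'.2 with h | h
      · exact ⟨B, subset_rfl, compl_subset_compl.2 h⟩
      · exact ⟨B', compl_subset_compl.2 h, subset_rfl⟩
    obtain ⟨B, hB⟩ := (hcomp 𝒬 h𝒬).elim_directed_cover _
      (fun B : c => ((hcS B.2).1).isOpen_compl) hsub hdir
    obtain ⟨q, hq𝒞, hq𝒬⟩ := (hcS B.2).2.2 𝒬 h𝒬
    exact hB hq𝒬 hq𝒞
  obtain ⟨m, -, hm⟩ := zorn_superset_nonempty S hzorn 𝒜
    ⟨h𝒜, subset_rfl, hmeet⟩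
  refine ⟨m, hm.1.1, hm.1.2.1, fun 𝒬 h𝒬 => hm.1.2.2 𝒬 h𝒬, ?_⟩
  intro B hB hBm hBmeet
  exact subset_antisymm hBm (hm.2 ⟨hB, hBm.trans hm.1.2.1, hBmeet⟩ hBm)

end Scott

/-- If `X` is a well-filtered `T₀` space, then the Scott power space
`Σ K(X)` (that is, `K(X)` with the Scott topology of the Smyth order) is well-filtered. -/
theorem stmt4 {X : Type u} [TopologicalSpace X] [T0Space X] (hwf : WellFiltered X) :
    @WellFiltered (KS X) (scottTop (KS X)) := by
  letI : TopologicalSpace (KS X) := scottTop (KS X)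
  intro 𝒦 h𝒦ne hmem h𝒦dir 𝒰 h𝒰 hsub
  by_contra hcon
  push_neg at hcon
  have hmeet : ∀ 𝒬 ∈ 𝒦, (𝒰ᶜ ∩ 𝒬).Nonempty := by
    intro 𝒬 h𝒬
    obtain ⟨q, hq𝒬, hq𝒰⟩ := Set.not_subset.1 (hcon 𝒬 h𝒬)
    exact ⟨q, hq𝒰, hq𝒬⟩
  obtain ⟨𝒞, h𝒞cl, h𝒞𝒜, h𝒞meet, h𝒞min⟩ :=
    exists_min_closed h𝒦ne (fun 𝒬 h𝒬 => (hmem 𝒬 h𝒬).2.1) h𝒰.isClosed_compl hmeet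
  set E : Set (KS X) → Set X := fun 𝒬 => ⋃₀ (Subtype.val '' (𝒬 ∩ 𝒞)) with hEdef
  have hQC : ∀ 𝒬 ∈ 𝒦, (𝒬 ∩ 𝒞).Nonempty := by
    intro 𝒬 h𝒬
    obtain ⟨K, hK𝒞, hK𝒬⟩ := h𝒞meet 𝒬 h𝒬
    exact ⟨K, hK𝒬, hK𝒞⟩
  have hEprops : ∀ 𝒬 ∈ 𝒦, (E 𝒬).Nonempty ∧ IsCompact (E 𝒬) ∧ IsSat (E 𝒬) :=
    fun 𝒬 h𝒬 => union_props hwf (hQC 𝒬 h𝒬) ((hmem 𝒬 h𝒬).2.1.inter_right h𝒞cl)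
  have hEmono : ∀ 𝒬₁ 𝒬₂ : Set (KS X), 𝒬₁ ⊆ 𝒬₂ → E 𝒬₁ ⊆ E 𝒬₂ := fun 𝒬₁ 𝒬₂ h =>
    sUnion_subset_sUnion (image_mono (inter_subset_inter h Subset.rfl))
  set ℰ : Set (Set X) := E '' 𝒦 with hℰdef
  have hℰmem : ∀ A ∈ ℰ, A.Nonempty ∧ IsCompact A ∧ IsSat A := by
    rintro _ ⟨𝒬, h𝒬, rfl⟩; exact hEprops 𝒬 h𝒬
  have hℰdir : ∀ A₁ ∈ ℰ, ∀ A₂ ∈ ℰ, ∃ A₃ ∈ ℰ, A₃ ⊆ A₁ ∧ A₃ ⊆ A₂ := by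
    rintro _ ⟨𝒬₁, h₁, rfl⟩ _ ⟨𝒬₂, h₂, rfl⟩
    obtain ⟨𝒬₃, h₃, hs₁, hs₂⟩ := h𝒦dir 𝒬₁ h₁ 𝒬₂ h₂
    exact ⟨E 𝒬₃, ⟨𝒬₃, h₃, rfl⟩, hEmono _ _ hs₁, hEmono _ _ hs₂⟩
  have hEall := wf_sInter hwf (h𝒦ne.image E) hℰmem hℰdir
  set Estar : KS X := ⟨⋂₀ ℰ, hEall⟩ with hEstardef
  -- every point of ⋂₀ ℰ lies in every member of 𝒞
  have hkey : ∀ x ∈ ⋂₀ ℰ, ∀ K ∈ 𝒞, x ∈ K.1 := by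
    intro x hx
    have hxcl : IsClosed {K : KS X | x ∈ K.1} := by
      rw [← isOpen_compl_iff, compl_setOf]
      exact notMem_scottOpen hwf x
    have hℛmeet : ∀ 𝒬 ∈ 𝒦, ((𝒞 ∩ {K : KS X | x ∈ K.1}) ∩ 𝒬).Nonempty := by
      intro 𝒬 h𝒬
      have hxE : x ∈ E 𝒬 := hx (E 𝒬) ⟨𝒬, h𝒬, rfl⟩
      obtain ⟨_, ⟨K, hK, rfl⟩, hxK⟩ := hxE
      exact ⟨K, ⟨hK.2, hxK⟩, hK.1⟩
    have := h𝒞min (𝒞 ∩ {K : KS X | x ∈ K.1}) (h𝒞cl.inter hxcl)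
      inter_subset_left hℛmeet
    intro K hK
    rw [← this] at hK
    exact hK.2
  set D : Set (KS X) := {L : KS X | ∃ 𝒬 ∈ 𝒦, L.1 = E 𝒬} with hDdef
  have hD𝒞 : D ⊆ 𝒞 := by
    rintro L ⟨𝒬, h𝒬, hLval⟩
    obtain ⟨K, hK𝒬, hK𝒞⟩ := hQC 𝒬 h𝒬
    refine scottClosed_lower h𝒞cl hK𝒞 ?_
    rw [KS.le_iff, hLval]
    exact subset_sUnion_of_mem (mem_image_of_mem Subtype.val ⟨hK𝒬, hK𝒞⟩)
  have hDne : D.Nonempty := by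
    obtain ⟨𝒬₀, h𝒬₀⟩ := h𝒦ne
    exact ⟨⟨E 𝒬₀, hEprops 𝒬₀ h𝒬₀⟩, 𝒬₀, h𝒬₀, rfl⟩
  have hDdir : DirectedOn (· ≤ ·) D := by
    rintro L₁ ⟨𝒬₁, h₁, hv₁⟩ L₂ ⟨𝒬₂, h₂, hv₂⟩
    obtain ⟨𝒬₃, h₃, hs₁, hs₂⟩ := h𝒦dir 𝒬₁ h₁ 𝒬₂ h₂
    refine ⟨⟨E 𝒬₃, hEprops 𝒬₃ h₃⟩, ⟨𝒬₃, h₃, rfl⟩, ?_, ?_⟩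
    · show (⟨E 𝒬₃, hEprops 𝒬₃ h₃⟩ : KS X).1 ⊆ L₁.1
      rw [hv₁]; exact hEmono _ _ hs₁
    · show (⟨E 𝒬₃, hEprops 𝒬₃ h₃⟩ : KS X).1 ⊆ L₂.1
      rw [hv₂]; exact hEmono _ _ hs₂
  have hlub : IsLUB D Estar := by
    constructor
    · rintro L ⟨𝒬, h𝒬, hLval⟩
      rw [KS.le_iff, hLval]
      exact fun x hx => hx (E 𝒬) ⟨𝒬, h𝒬, rfl⟩
    · intro b hb
      rw [KS.le_iff]
      refine subset_sInter ?_
      rintro _ ⟨𝒬, h𝒬, rfl⟩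
      exact hb (⟨𝒬, h𝒬, rfl⟩ : (⟨E 𝒬, hEprops 𝒬 h𝒬⟩ : KS X) ∈ D)
  have hEstar𝒞 : Estar ∈ 𝒞 := scottClosed_dsup h𝒞cl hD𝒞 hDne hDdir hlub
  have hEstar𝒬 : ∀ 𝒬 ∈ 𝒦, Estar ∈ 𝒬 := by
    intro 𝒬 h𝒬
    obtain ⟨K, hK𝒬, hK𝒞⟩ := hQC 𝒬 h𝒬
    have hle : K ≤ Estar := by
      rw [KS.le_iff]
      exact fun x hx => hkey x hx K hK𝒞
    have hsat := (hmem 𝒬 h𝒬).2.2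
    rw [hsat]
    refine mem_sInter.2 ?_
    rintro 𝒱 ⟨h𝒱o, h𝒱s⟩
    exact (show ScottOpen 𝒱 from h𝒱o).1 hle (h𝒱s hK𝒬)
  have h1 : Estar ∈ 𝒰 := hsub (mem_sInter.2 fun 𝒬 h𝒬 => hEstar𝒬 𝒬 h𝒬)
  exact h𝒞𝒜 hEstar𝒞 h1
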